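/- Let N = (P,T,F) be a continuous Petri net, u ∈ T, and a, b ∈ ℝ^P. Define the atomic proposition φ_< over pairs of markings by φ_<(m,m') :⟺ a·m < b·m'. Then φ_< enables u (i.e., there exist (m,m') ∈ sol(φ_<) and α > 0 with m' ≥ α·pre(u)) if and only if ¬(a ≥ 0) or ¬(b ≤ 0), where the inequalities are componentwise. -/

import Mathlib

/-- A continuous Petri net `N = (P, T, F)` with places `P`, transitions `T`,
and flow matrices `F₋, F₊ : P × T → ℕ`. -/
structure PetriNet (P T : Type*) where
  Fminus : P → T → ℕ
  Fplus : P → T → ℕ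

namespace PetriNet

variable {P T : Type*}

/-- `pre(t)`: the column of `F₋` associated to transition `t`, as a real vector. -/
def pre (N : PetriNet P T) (t : T) : P → ℝ := fun p => (N.Fminus p t : ℝ)

/-- `post(t)`: the column of `F₊` associated to transition `t`, as a real vector. -/
def post (N : PetriNet P T) (t : T) : P → ℝ := fun p => (N.Fplus p t : ℝ)

/-- The transpose net `N^T := (P, T, (F₊, F₋))`. -/
def transpose (N : PetriNet P T) : PetriNet P T := ⟨N.Fplus, N.Fminus⟩

/-- `m →(αt) m'` : transition `t` is `α`-fired (α > 0) from `m`, leading to `m'`. -/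
def fire (N : PetriNet P T) (t : T) (α : ℝ) (m m' : P → ℝ) : Prop :=
  0 < α ∧ (∀ p, α * N.pre t p ≤ m p) ∧
    ∀ p, m' p = m p + α * (N.post t p - N.pre t p)

/-- Firing a sequence `σ = α₁t₁ ⋯ αₙtₙ` (a list of (amount, transition) pairs)
from `m` to `m'`. -/
def fireSeq (N : PetriNet P T) : List (ℝ × T) → (P → ℝ) → (P → ℝ) → Prop
  | [], m, m' => m = m'
  | (α, t) :: σ, m, m' => ∃ m₁, N.fire t α m m₁ ∧ N.fireSeq σ m₁ m'

/-- The support of a firing sequence: the set of transitions occurring in it. -/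
def seqSupport (σ : List (ℝ × T)) : Set T := {t | ∃ α : ℝ, (α, t) ∈ σ}

end PetriNet

open PetriNet

/-- The atomic proposition `φ_<(m, m') :⟺ a·m < b·m'` enables a transition `u`
(i.e. some solution `(m, m')` has `m' ≥ α·pre(u)` for some `α > 0`) iff
`¬(a ≥ 0)` or `¬(b ≤ 0)`. -/
theorem lt_atom_enables_iff
    {P T : Type*} [Fintype P]
    (N : PetriNet P T) (u : T) (a b : P → ℝ) :
    (∃ m m' : P → ℝ, 0 ≤ m ∧ 0 ≤ m' ∧
        (∑ p, a p * m p) < (∑ p, b p * m' p) ∧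
        ∃ α : ℝ, 0 < α ∧ ∀ p, α * N.pre u p ≤ m' p) ↔
      (¬ 0 ≤ a ∨ ¬ b ≤ 0) := by
  classical
  have hpre : ∀ p, (0:ℝ) ≤ N.pre u p := fun p => by
    simp [PetriNet.pre]
  constructor
  · rintro ⟨m, m', hm, hm', hlt, -⟩
    by_contra hc
    push_neg at hc
    obtain ⟨ha, hb⟩ := hc
    have h1 : (0:ℝ) ≤ ∑ p, a p * m p :=
      Finset.sum_nonneg fun p _ => mul_nonneg (ha p) (hm p)
    have h2 : (∑ p, b p * m' p) ≤ 0 :=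
      Finset.sum_nonpos fun p _ => mul_nonpos_of_nonpos_of_nonneg (hb p) (hm' p)
    linarith
  · rintro (ha | hb)
    · rw [Pi.le_def] at ha
      push_neg at ha
      obtain ⟨p₀, hp₀⟩ := ha
      simp only [Pi.zero_apply] at hp₀
      set S := ∑ p, b p * N.pre u p with hS
      set c : ℝ := (|S| + 1) / (-(a p₀)) with hc
      have hcpos : 0 < c := div_pos (by positivity) (by linarith)
      refine ⟨fun p => c * (if p = p₀ then 1 else 0), N.pre u,
        fun p => by dsimp; positivity,
        fun p => hpre p, ?_, 1, one_pos,
        fun p => by simp⟩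
      have h1 : (∑ p, a p * (c * (if p = p₀ then 1 else 0))) = a p₀ * c := by
        rw [Finset.sum_eq_single p₀]
        · simp
        · intro q _ hq; simp [hq]
        · simp
      rw [h1]
      have hca : a p₀ * c = -(|S| + 1) := by
        rw [hc]
        rw [hc] at hcpos
        have hne : a p₀ ≠ 0 := hp₀.ne
        field_simp
      rw [hca]
      have h2 := neg_abs_le S
      have h3 := abs_nonneg S
      linarith
    · rw [Pi.le_def] at hb
      push_neg at hb
      obtain ⟨p₀, hp₀⟩ := hb
      simp only [Pi.zero_apply] at hp₀
      set S := ∑ p, b p * N.pre u p with hS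
      set c : ℝ := (|S| + 1) / (b p₀) with hc
      have hcpos : 0 < c := div_pos (by positivity) hp₀
      refine ⟨0, fun p => N.pre u p + c * (if p = p₀ then 1 else 0),
        le_refl 0,
        fun p => by have := hpre p; dsimp; positivity,
        ?_, 1, one_pos,
        fun p => by
          dsimp
          have : (0:ℝ) ≤ c * (if p = p₀ then 1 else 0) := by positivity
          linarith⟩
      have hsum : (∑ p, b p * (N.pre u p + c * (if p = p₀ then 1 else 0)))
          = S + b p₀ * c := by
        simp only [mul_add]
        rw [Finset.sum_add_distrib, hS]
        congr 1
        rw [Finset.sum_eq_single p₀]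
        · simp
        · intro q _ hq; simp [hq]
        · simp
      rw [hsum]
      simp only [Pi.zero_apply, mul_zero, Finset.sum_const_zero]
      have hbc : b p₀ * c = |S| + 1 := by
        rw [hc]; field_simp
      rw [hbc]
      have := neg_abs_le S
      linarith
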